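/- (Norm expansion of the D-tensor.) Let n ≥ 3, let m, λ, ρ be real numbers, let Ric be a symmetric bilinear form on V with scal := Σ_i Ric(e_i,e_i), and let v, p ∈ V satisfy scal = (n−1)λ − (m−1)ρ and Ric(X,v) = ρ⟨X,v⟩ − (m/2)⟨X,p⟩ for all X ∈ V. Then |D|² = (1/(2(n−1)(n−2)²))·(4(n−1)|v|²|Ric|² − m²n|p|²) + (4m((m+n−1)ρ − (n−1)λ)/(2(n−1)(n−2)²))·⟨p,v⟩ − (4(((n−1)λ − mρ)² + (n−1)ρ²)/(2(n−1)(n−2)²))·|v|², where |Ric|² := Σ_{i,j} Ric(e_i,e_j)². -/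

import Mathlib

open scoped InnerProductSpace
open Finset

private lemma sumDelMul {n : ℕ} (j : Fin n) (f : Fin n → ℝ) :
    ∑ k, (if j = k then (1:ℝ) else 0) * f k = f j := by
  simp [ite_mul]

private lemma sum_three {n : ℕ} (f X Y Z : Fin n → ℝ) (α β γ : ℝ)
    (h : ∀ i, f i = α * X i + β * Y i + γ * Z i) :
    ∑ i, f i = α * (∑ i, X i) + β * (∑ i, Y i) + γ * (∑ i, Z i) := by
  simp_rw [h, Finset.sum_add_distrib, ← Finset.mul_sum]

private lemma T1lem {n : ℕ} (u : Fin n → ℝ) :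
    ∑ i, ∑ j, ∑ k, (u i * (if j = k then (1:ℝ) else 0)
        - u j * (if i = k then (1:ℝ) else 0))^2
      = 2 * ((n:ℝ) - 1) * ∑ i, u i ^ 2 := by
  have h1 : ∀ i j : Fin n,
      ∑ k, (u i * (if j = k then (1:ℝ) else 0) - u j * (if i = k then (1:ℝ) else 0))^2
      = u i ^ 2 + u j ^ 2 - 2 * (u i * u j) * (if i = j then (1:ℝ) else 0) := by
    intro i j
    have expand : ∀ k : Fin n,
        (u i * (if j = k then (1:ℝ) else 0) - u j * (if i = k then (1:ℝ) else 0))^2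
        = u i ^ 2 * (if j = k then (1:ℝ) else 0)
          - (2 * (u i * u j)) * ((if j = k then (1:ℝ) else 0) * (if i = k then (1:ℝ) else 0))
          + u j ^ 2 * (if i = k then (1:ℝ) else 0) := by
      intro k; by_cases h1 : j = k <;> by_cases h2 : i = k <;> simp [h1, h2] <;> ring
    simp_rw [expand]
    rw [Finset.sum_add_distrib, Finset.sum_sub_distrib, ← Finset.mul_sum, ← Finset.mul_sum,
      ← Finset.mul_sum]
    by_cases h : i = j
    · simp [h]; ring
    · simp [h, Ne.symm h, mul_ite, ite_mul]
  simp_rw [h1]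
  simp only [Finset.sum_add_distrib, Finset.sum_sub_distrib, Finset.sum_const,
    Finset.card_univ, Fintype.card_fin, nsmul_eq_mul, mul_ite, mul_one, mul_zero,
    Finset.sum_ite_eq, Finset.mem_univ, if_true]
  simp_rw [← Finset.mul_sum, ← pow_two]
  ring

private lemma T2lem {n : ℕ} (u a A : Fin n → ℝ) (RR : Fin n → Fin n → ℝ)
    (hsymm : ∀ i j, RR i j = RR j i)
    (hA : ∀ k, ∑ j, RR j k * a j = A k) :
    ∑ i, ∑ j, ∑ k, ((u i * (if j = k then (1:ℝ) else 0)
        - u j * (if i = k then (1:ℝ) else 0)) * (RR j k * a i - RR i k * a j))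
      = 2 * ((∑ i, RR i i) * (∑ i, u i * a i) - ∑ i, u i * A i) := by
  have hA' : ∀ k, ∑ j, RR k j * a j = A k := by
    intro k; rw [← hA k]; exact Finset.sum_congr rfl fun j _ => by rw [hsymm]
  have hin : ∀ i j : Fin n,
      ∑ k, ((u i * (if j = k then (1:ℝ) else 0) - u j * (if i = k then (1:ℝ) else 0))
        * (RR j k * a i - RR i k * a j))
      = u i * a i * RR j j - u i * a j * RR i j - u j * a i * RR j i + u j * a j * RR i i := by
    intro i j
    have expand : ∀ k : Fin n,
        ((u i * (if j = k then (1:ℝ) else 0) - u j * (if i = k then (1:ℝ) else 0))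
          * (RR j k * a i - RR i k * a j))
        = (u i * a i) * ((if j = k then (1:ℝ) else 0) * RR j k)
          - (u i * a j) * ((if j = k then (1:ℝ) else 0) * RR i k)
          - (u j * a i) * ((if i = k then (1:ℝ) else 0) * RR j k)
          + (u j * a j) * ((if i = k then (1:ℝ) else 0) * RR i k) := fun k => by ring
    simp_rw [expand]
    rw [Finset.sum_add_distrib, Finset.sum_sub_distrib, Finset.sum_sub_distrib,
      ← Finset.mul_sum, ← Finset.mul_sum, ← Finset.mul_sum, ← Finset.mul_sum,
      sumDelMul, sumDelMul, sumDelMul, sumDelMul]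
  simp_rw [hin]
  simp only [Finset.sum_add_distrib, Finset.sum_sub_distrib]
  have e1 : ∑ i, ∑ j, u i * a i * RR j j = (∑ i, RR i i) * ∑ i, u i * a i := by
    simp_rw [← Finset.mul_sum, ← Finset.sum_mul]
    ring
  have e2 : ∑ i, ∑ j, u i * a j * RR i j = ∑ i, u i * A i := by
    have h : ∀ i, ∑ j, u i * a j * RR i j = u i * A i := by
      intro i
      rw [← hA' i, Finset.mul_sum]
      exact Finset.sum_congr rfl fun j _ => by ring
    simp_rw [h]
  have e3 : ∑ i, ∑ j, u j * a i * RR j i = ∑ i, u i * A i := by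
    rw [Finset.sum_comm]
    have h : ∀ j, ∑ i, u j * a i * RR j i = u j * A j := by
      intro j
      rw [← hA' j, Finset.mul_sum]
      exact Finset.sum_congr rfl fun i _ => by ring
    simp_rw [h]
  have e4 : ∑ i, ∑ j, u j * a j * RR i i = (∑ i, RR i i) * ∑ i, u i * a i := by
    simp_rw [← Finset.sum_mul, ← Finset.mul_sum]
    ring
  rw [e1, e2, e3, e4]
  ring

private lemma T3lem {n : ℕ} (a A : Fin n → ℝ) (RR : Fin n → Fin n → ℝ)
    (hA : ∀ k, ∑ j, RR j k * a j = A k) :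
    ∑ i, ∑ j, ∑ k, (RR j k * a i - RR i k * a j)^2
      = 2 * ((∑ i, a i ^ 2) * (∑ i, ∑ j, RR i j ^ 2) - ∑ k, A k ^ 2) := by
  have reorder : ∑ i, ∑ j, ∑ k, (RR j k * a i - RR i k * a j)^2
      = ∑ k, ∑ i, ∑ j, (RR j k * a i - RR i k * a j)^2 := by
    have h1 : ∀ i : Fin n, ∑ j, ∑ k, (RR j k * a i - RR i k * a j)^2
        = ∑ k, ∑ j, (RR j k * a i - RR i k * a j)^2 := fun i => Finset.sum_comm
    simp_rw [h1]
    exact Finset.sum_comm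
  rw [reorder]
  have hin : ∀ k : Fin n, ∑ i, ∑ j, (RR j k * a i - RR i k * a j)^2
      = 2 * ((∑ i, a i ^ 2) * (∑ j, RR j k ^ 2)) - 2 * A k ^ 2 := by
    intro k
    have expand : ∀ i j : Fin n, (RR j k * a i - RR i k * a j)^2
        = a i ^ 2 * RR j k ^ 2 - 2 * ((RR i k * a i) * (RR j k * a j))
          + RR i k ^ 2 * a j ^ 2 := fun i j => by ring
    simp_rw [expand]
    simp only [Finset.sum_add_distrib, Finset.sum_sub_distrib, ← Finset.mul_sum,
      ← Finset.sum_mul]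
    rw [hA k]
    ring
  simp_rw [hin]
  rw [Finset.sum_sub_distrib, ← Finset.mul_sum, ← Finset.mul_sum, ← Finset.mul_sum]
  rw [show (∑ i, ∑ j, RR j i ^ 2) = ∑ i, ∑ j, RR i j ^ 2 from Finset.sum_comm]
  ring

private lemma corelem {n : ℕ} (u a A : Fin n → ℝ) (RR : Fin n → Fin n → ℝ) (c : ℝ)
    (hsymm : ∀ i j, RR i j = RR j i)
    (hA : ∀ k, ∑ j, RR j k * a j = A k) :
    ∑ i, ∑ j, ∑ k, ((u i * (if j = k then (1:ℝ) else 0)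
        - u j * (if i = k then (1:ℝ) else 0))
        + c * (RR j k * a i - RR i k * a j))^2
      = 2 * ((n:ℝ) - 1) * (∑ i, u i ^ 2)
        + 4 * c * ((∑ i, RR i i) * (∑ i, u i * a i) - ∑ i, u i * A i)
        + 2 * c ^ 2 * ((∑ i, a i ^ 2) * (∑ i, ∑ j, RR i j ^ 2) - ∑ k, A k ^ 2) := by
  have expand : ∀ i j k : Fin n,
      ((u i * (if j = k then (1:ℝ) else 0) - u j * (if i = k then (1:ℝ) else 0))
        + c * (RR j k * a i - RR i k * a j))^2
      = (u i * (if j = k then (1:ℝ) else 0) - u j * (if i = k then (1:ℝ) else 0))^2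
        + (2 * c) * ((u i * (if j = k then (1:ℝ) else 0)
            - u j * (if i = k then (1:ℝ) else 0)) * (RR j k * a i - RR i k * a j))
        + c ^ 2 * ((RR j k * a i - RR i k * a j)^2) := fun i j k => by ring
  simp_rw [expand]
  simp only [Finset.sum_add_distrib, ← Finset.mul_sum]
  rw [T1lem u, T2lem u a A RR hsymm hA, T3lem a A RR hA]
  ring

set_option maxHeartbeats 1600000 in
/-- Norm expansion of the D-tensor on a (λ, n+m)-Einstein manifold
(algebraic, pointwise form). -/
theorem stmt_3 (n : ℕ) (hn : 3 ≤ n) (m lam rho : ℝ)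
    (e : OrthonormalBasis (Fin n) ℝ (EuclideanSpace ℝ (Fin n)))
    (Ric : EuclideanSpace ℝ (Fin n) →ₗ[ℝ] EuclideanSpace ℝ (Fin n) →ₗ[ℝ] ℝ)
    (hRicSymm : ∀ X Y, Ric X Y = Ric Y X)
    (scal : ℝ) (hscal : scal = ∑ i, Ric (e i) (e i))
    (v p : EuclideanSpace ℝ (Fin n))
    (hscalEq : scal = ((n : ℝ) - 1) * lam - (m - 1) * rho)
    (hRicv : ∀ X, Ric X v = rho * ⟪X, v⟫_ℝ - (m / 2) * ⟪X, p⟫_ℝ)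
    (D : EuclideanSpace ℝ (Fin n) → EuclideanSpace ℝ (Fin n) →
      EuclideanSpace ℝ (Fin n) → ℝ)
    (hD : ∀ X Y Z, D X Y Z =
      (1 / (((n : ℝ) - 1) * ((n : ℝ) - 2))) *
        (Ric X v * ⟪Y, Z⟫_ℝ - Ric Y v * ⟪X, Z⟫_ℝ)
      + (1 / ((n : ℝ) - 2)) * (Ric Y Z * ⟪X, v⟫_ℝ - Ric X Z * ⟪Y, v⟫_ℝ)
      - (scal / (((n : ℝ) - 1) * ((n : ℝ) - 2))) *
          (⟪X, v⟫_ℝ * ⟪Y, Z⟫_ℝ - ⟪Y, v⟫_ℝ * ⟪X, Z⟫_ℝ)) :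
    ∑ i, ∑ j, ∑ k, (D (e i) (e j) (e k)) ^ 2
      = (1 / (2 * ((n : ℝ) - 1) * ((n : ℝ) - 2) ^ 2)) *
          (4 * ((n : ℝ) - 1) * ‖v‖ ^ 2 * (∑ i, ∑ j, (Ric (e i) (e j)) ^ 2)
            - m ^ 2 * (n : ℝ) * ‖p‖ ^ 2)
        + (4 * m * ((m + (n : ℝ) - 1) * rho - ((n : ℝ) - 1) * lam) /
            (2 * ((n : ℝ) - 1) * ((n : ℝ) - 2) ^ 2)) * ⟪p, v⟫_ℝ
        - (4 * (((((n : ℝ) - 1) * lam - m * rho)) ^ 2 + ((n : ℝ) - 1) * rho ^ 2) /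
            (2 * ((n : ℝ) - 1) * ((n : ℝ) - 2) ^ 2)) * ‖v‖ ^ 2 := by
  have hn3 : (3:ℝ) ≤ (n:ℝ) := by exact_mod_cast hn
  have hn1 : ((n:ℝ) - 1) ≠ 0 := by intro h; linarith
  have hn2 : ((n:ℝ) - 2) ≠ 0 := by intro h; linarith
  have hdd : (((n:ℝ) - 1) * ((n:ℝ) - 2)) ≠ 0 := mul_ne_zero hn1 hn2
  have hdel : ∀ i j : Fin n, ⟪e i, e j⟫_ℝ = if i = j then (1:ℝ) else 0 :=
    orthonormal_iff_ite.mp e.orthonormal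
  -- basic inner product sums
  have hVa : ∑ i, ⟪e i, v⟫_ℝ * ⟪e i, v⟫_ℝ = ‖v‖ ^ 2 := by
    rw [← real_inner_self_eq_norm_sq, ← e.sum_inner_mul_inner v v]
    exact Finset.sum_congr rfl fun i _ => by rw [real_inner_comm]
  have hPa : ∑ i, ⟪e i, p⟫_ℝ * ⟪e i, v⟫_ℝ = ⟪p, v⟫_ℝ := by
    rw [← e.sum_inner_mul_inner p v]
    exact Finset.sum_congr rfl fun i _ => by rw [real_inner_comm]
  have hBa : ∑ i, ⟪e i, p⟫_ℝ * ⟪e i, p⟫_ℝ = ‖p‖ ^ 2 := by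
    rw [← real_inner_self_eq_norm_sq, ← e.sum_inner_mul_inner p p]
    exact Finset.sum_congr rfl fun i _ => by rw [real_inner_comm]
  -- the key contraction
  have hA : ∀ k, ∑ j, Ric (e j) (e k) * ⟪e j, v⟫_ℝ
      = rho * ⟪e k, v⟫_ℝ - m / 2 * ⟪e k, p⟫_ℝ := by
    intro k
    have h1 : Ric v (e k) = ∑ j, Ric (e j) (e k) * ⟪e j, v⟫_ℝ := by
      conv_lhs => rw [← e.sum_repr' v]
      rw [map_sum, LinearMap.sum_apply]
      exact Finset.sum_congr rfl fun j _ => by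
        rw [LinearMap.map_smul, LinearMap.smul_apply, smul_eq_mul]; exact mul_comm _ _
    rw [← h1, hRicSymm, hRicv]
  set u : Fin n → ℝ := fun i =>
    (rho * ⟪e i, v⟫_ℝ - m / 2 * ⟪e i, p⟫_ℝ) / (((n:ℝ) - 1) * ((n:ℝ) - 2))
      - scal * ⟪e i, v⟫_ℝ / (((n:ℝ) - 1) * ((n:ℝ) - 2)) with hu
  have hDe : ∀ i j k : Fin n, D (e i) (e j) (e k)
      = (u i * (if j = k then (1:ℝ) else 0) - u j * (if i = k then (1:ℝ) else 0))
        + (1 / ((n:ℝ) - 2)) *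
          (Ric (e j) (e k) * ⟪e i, v⟫_ℝ - Ric (e i) (e k) * ⟪e j, v⟫_ℝ) := by
    intro i j k
    rw [hD, hRicv, hRicv, hdel, hdel]
    simp only [hu]
    ring
  simp_rw [hDe]
  have core := corelem (n := n) u (fun i => ⟪e i, v⟫_ℝ)
    (fun k => rho * ⟪e k, v⟫_ℝ - m / 2 * ⟪e k, p⟫_ℝ)
    (fun i j => Ric (e i) (e j)) (1 / ((n:ℝ) - 2))
    (fun i j => hRicSymm (e i) (e j)) hA
  rw [core]
  -- evaluate the scalar sums
  have hS0 : ∑ i, Ric (e i) (e i) = scal := hscal.symm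
  have hS1 : ∑ i, u i ^ 2
      = ((rho - scal) ^ 2 / (((n:ℝ) - 1) * ((n:ℝ) - 2)) ^ 2) * ‖v‖ ^ 2
        + (-((rho - scal) * m) / (((n:ℝ) - 1) * ((n:ℝ) - 2)) ^ 2) * ⟪p, v⟫_ℝ
        + (m ^ 2 / 4 / (((n:ℝ) - 1) * ((n:ℝ) - 2)) ^ 2) * ‖p‖ ^ 2 := by
    rw [← hVa, ← hPa, ← hBa]
    refine sum_three _ _ _ _ _ _ _ (fun i => ?_)
    simp only [hu]
    field_simp
    ring
  have hS2 : ∑ i, u i * ⟪e i, v⟫_ℝ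
      = ((rho - scal) / (((n:ℝ) - 1) * ((n:ℝ) - 2))) * ‖v‖ ^ 2
        + (-(m / 2) / (((n:ℝ) - 1) * ((n:ℝ) - 2))) * ⟪p, v⟫_ℝ
        + 0 * ‖p‖ ^ 2 := by
    rw [← hVa, ← hPa, ← hBa]
    refine sum_three _ _ _ _ _ _ _ (fun i => ?_)
    simp only [hu]
    field_simp
    ring
  have hS3 : ∑ i, u i * (rho * ⟪e i, v⟫_ℝ - m / 2 * ⟪e i, p⟫_ℝ)
      = (rho * (rho - scal) / (((n:ℝ) - 1) * ((n:ℝ) - 2))) * ‖v‖ ^ 2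
        + ((-(m / 2) * rho - (rho - scal) * (m / 2)) / (((n:ℝ) - 1) * ((n:ℝ) - 2))) * ⟪p, v⟫_ℝ
        + ((m ^ 2 / 4) / (((n:ℝ) - 1) * ((n:ℝ) - 2))) * ‖p‖ ^ 2 := by
    rw [← hVa, ← hPa, ← hBa]
    refine sum_three _ _ _ _ _ _ _ (fun i => ?_)
    simp only [hu]
    field_simp
    ring
  have hS4 : ∑ i, ⟪e i, v⟫_ℝ ^ 2 = ‖v‖ ^ 2 := by
    rw [← hVa]
    exact Finset.sum_congr rfl fun i _ => by rw [pow_two]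
  have hS5 : ∑ k, (rho * ⟪e k, v⟫_ℝ - m / 2 * ⟪e k, p⟫_ℝ) ^ 2
      = rho ^ 2 * ‖v‖ ^ 2 + (-(rho * m)) * ⟪p, v⟫_ℝ + (m ^ 2 / 4) * ‖p‖ ^ 2 := by
    rw [← hVa, ← hPa, ← hBa]
    refine sum_three _ _ _ _ _ _ _ (fun i => ?_)
    ring
  rw [hS0, hS1, hS2, hS3, hS4, hS5, hscalEq]
  field_simp
  ring
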